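/- Fix an initial state ξ in 𝔹_T^N and let φ : 𝔹^N → ℝ satisfy φ(𝐀) = φ(𝐁) = 0. Then the series Σ_{t=0}^∞ E[φ(x^t) | x⁰ = ξ] converges absolutely, and the expectation of φ under the stationary distribution π_⟲(ξ) of the amended chain is differentiable in u at u = 0 with (d/du)|_{u=0} E_{π_⟲(ξ)}[φ] = Σ_{t=0}^∞ E[φ(x^t) | x⁰ = ξ]. -/

import Mathlib

open Finset Filter Asymptotics Topology

namespace Evo

/-- A population state: each of the `N` individuals has type `A` (`true`) or `B` (`false`). -/
abbrev St (N : ℕ) := Fin N → Bool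

/-- A replacement event `(R, α)`: the set `R` of replaced individuals together with a
parentage map (only the values on `R` are relevant). -/
abbrev Event (N : ℕ) := Finset (Fin N) × (Fin N → Fin N)

/-- The extended parentage map `α̃`, equal to `α` on `R` and the identity off `R`. -/
def extMap {N : ℕ} (e : Event N) (i : Fin N) : Fin N := if i ∈ e.1 then e.2 i else i

/-- The state update induced by a replacement event: `x ↦ x_α̃`. -/
def upd {N : ℕ} (e : Event N) (x : St N) : St N := fun i => x (extMap e i)

/-- Boolean values as reals. -/
def bv (b : Bool) : ℝ := if b then 1 else 0

/-- The all-`A` state. -/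
def stA (N : ℕ) : St N := fun _ => true

/-- The all-`B` state. -/
def stB (N : ℕ) : St N := fun _ => false

/-- Transient (non-monoallelic) states, i.e. members of `𝔹_T^N`. -/
def Transient {N : ℕ} (x : St N) : Prop := x ≠ stA N ∧ x ≠ stB N

/-- A replacement rule: for each state, a probability distribution over replacement events. -/
def IsRule {N : ℕ} (p : St N → Event N → ℝ) : Prop :=
  (∀ x e, 0 ≤ p x e) ∧ ∀ x, ∑ e : Event N, p x e = 1

/-- A state-independent distribution over replacement events (a neutral replacement rule). -/
def IsDist {N : ℕ} (p0 : Event N → ℝ) : Prop :=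
  (∀ e, 0 ≤ p0 e) ∧ ∑ e : Event N, p0 e = 1

/-- Transition matrix of the Markov chain induced by a replacement rule. -/
def tmat {N : ℕ} (p : St N → Event N → ℝ) : Matrix (St N) (St N) ℝ :=
  Matrix.of fun x y => ∑ e : Event N, if upd e x = y then p x e else 0

/-- The Fixation Axiom. -/
def FixAxiom {N : ℕ} (p : St N → Event N → ℝ) : Prop :=
  ∃ (i : Fin N) (m : ℕ) (ev : Fin m → Event N), 1 ≤ m ∧
    (∀ k x, 0 < p x (ev k)) ∧ (∃ k, i ∈ (ev k).1) ∧
    (∀ j, (List.ofFn fun k => extMap (ev k)).foldr (· ∘ ·) id j = i)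

/-- The sojourn time `t_ξ(x)`: expected number of visits to `x` prior to absorption,
starting from `ξ` (expressed as `Σ_t (P^t)(ξ, x)`). -/
noncomputable def sojourn {N : ℕ} (p : St N → Event N → ℝ) (ξ x : St N) : ℝ :=
  ∑' t : ℕ, (tmat p ^ t) ξ x

/-- The amended transition matrix `P^⟲(ξ)`. -/
def amend {N : ℕ} (p : St N → Event N → ℝ) (ξ : St N) (u : ℝ) : Matrix (St N) (St N) ℝ :=
  Matrix.of fun x y =>
    if x = stA N ∨ x = stB N then (if y = ξ then u else (1 - u) * tmat p x y)
    else tmat p x y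

/-- `q` is a stationary distribution for the transition matrix `P`. -/
def IsStat {N : ℕ} (P : Matrix (St N) (St N) ℝ) (q : St N → ℝ) : Prop :=
  (∀ x, 0 ≤ q x) ∧ (∑ x : St N, q x = 1) ∧ ∀ y, ∑ x : St N, q x * P x y = q y

/-- The operator `⟨φ⟩_ξ = Σ_{t=0}^∞ E[φ(x^t) | x⁰ = ξ]` for the chain with rule `p`. -/
noncomputable def sgen {N : ℕ} (p : St N → Event N → ℝ) (ξ : St N) (φ : St N → ℝ) : ℝ :=
  ∑' t : ℕ, ∑ x : St N, (tmat p ^ t) ξ x * φ x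

section Aux
variable {N : ℕ} {p : St N → Event N → ℝ}

lemma tmat_nonneg (hp : IsRule p) (x y : St N) : 0 ≤ tmat p x y :=
  Finset.sum_nonneg fun e _ => by split <;> [exact hp.1 x e; exact le_rfl]

lemma tmat_row_sum (hp : IsRule p) (x : St N) : ∑ y : St N, tmat p x y = 1 := by
  unfold tmat
  simp only [Matrix.of_apply]
  rw [Finset.sum_comm]
  calc ∑ e : Event N, ∑ y : St N, (if upd e x = y then p x e else 0)
      = ∑ e : Event N, p x e := by
        refine Finset.sum_congr rfl fun e _ => ?_
        rw [Finset.sum_ite_eq (Finset.univ) (upd e x) (fun _ => p x e)]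
        simp
    _ = 1 := hp.2 x

lemma pow_nonneg_entry (hp : IsRule p) (t : ℕ) (x y : St N) : 0 ≤ (tmat p ^ t) x y := by
  induction t generalizing x y with
  | zero => simp [Matrix.one_apply]; positivity
  | succ n ih =>
    rw [pow_succ, Matrix.mul_apply]
    exact Finset.sum_nonneg fun z _ => mul_nonneg (ih x z) (tmat_nonneg hp z y)

lemma pow_row_sum (hp : IsRule p) (t : ℕ) (x : St N) : ∑ y : St N, (tmat p ^ t) x y = 1 := by
  induction t generalizing x with
  | zero => simp [Matrix.one_apply]
  | succ n ih =>
    simp only [pow_succ, Matrix.mul_apply]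
    rw [Finset.sum_comm]
    calc ∑ z : St N, ∑ y : St N, (tmat p ^ n) x z * tmat p z y
        = ∑ z : St N, (tmat p ^ n) x z * 1 := by
          refine Finset.sum_congr rfl fun z _ => ?_
          rw [← Finset.mul_sum, tmat_row_sum hp]
      _ = 1 := by simp [ih]

variable {N : ℕ} {p : St N → Event N → ℝ}

lemma upd_stA (e : Event N) : upd e (stA N) = stA N := rfl
lemma upd_stB (e : Event N) : upd e (stB N) = stB N := rfl

lemma tmat_fixed (hp : IsRule p) {a : St N} (ha : ∀ e : Event N, upd e a = a) (y : St N) :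
    tmat p a y = if y = a then 1 else 0 := by
  unfold tmat
  simp only [Matrix.of_apply, ha]
  by_cases h : a = y
  · subst h; simp [hp.2 a]
  · simp [h, Ne.symm h]

lemma pow_fixed (hp : IsRule p) {a : St N} (ha : ∀ e : Event N, upd e a = a) (t : ℕ) (y : St N) :
    (tmat p ^ t) a y = if y = a then 1 else 0 := by
  induction t with
  | zero => simp [Matrix.one_apply, eq_comm]
  | succ n ih =>
    rw [pow_succ', Matrix.mul_apply]
    simp only [tmat_fixed hp ha, ite_mul, one_mul, zero_mul, Finset.sum_ite_eq',
      Finset.mem_univ, if_true, ih]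

variable {N : ℕ} {p : St N → Event N → ℝ}

lemma pow_add_entry_ge (hp : IsRule p) (a b : ℕ) (x y z : St N) :
    (tmat p ^ a) x y * (tmat p ^ b) y z ≤ (tmat p ^ (a + b)) x z := by
  rw [pow_add, Matrix.mul_apply]
  exact Finset.single_le_sum
    (f := fun w => (tmat p ^ a) x w * (tmat p ^ b) w z)
    (fun w _ => mul_nonneg (pow_nonneg_entry hp a x w) (pow_nonneg_entry hp b w z))
    (Finset.mem_univ y)

lemma tmat_ge_event (hp : IsRule p) (x : St N) (e : Event N) :
    p x e ≤ tmat p x (upd e x) := by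
  unfold tmat
  simp only [Matrix.of_apply]
  have := Finset.single_le_sum
    (f := fun e' : Event N => if upd e' x = upd e x then p x e' else 0)
    (fun e' _ => by split <;> [exact hp.1 x e'; exact le_rfl]) (Finset.mem_univ e)
  simpa using this

lemma path_lb (hp : IsRule p) (δ : ℝ) (hδ : 0 ≤ δ) :
    ∀ (es : List (Event N)) (x : St N), (∀ e ∈ es, ∀ x', δ ≤ p x' e) →
    δ ^ es.length ≤ (tmat p ^ es.length) x (es.foldl (fun s e => upd e s) x) := by
  intro es
  induction es with
  | nil => intro x _; simp [Matrix.one_apply]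
  | cons e es ih =>
    intro x hes
    have h1 : δ ≤ tmat p x (upd e x) :=
      le_trans (hes e List.mem_cons_self x) (tmat_ge_event hp x e)
    have h2 := ih (upd e x) (fun e' he' x' => hes e' (List.mem_cons_of_mem e he') x')
    calc δ ^ (e :: es).length = δ * δ ^ es.length := by rw [List.length_cons, pow_succ']
      _ ≤ tmat p x (upd e x) * (tmat p ^ es.length) (upd e x) (es.foldl (fun s e => upd e s) (upd e x)) := by
          apply mul_le_mul h1 h2 (by positivity)
          exact le_trans hδ h1
      _ ≤ (tmat p ^ (1 + es.length)) x (es.foldl (fun s e => upd e s) (upd e x)) := by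
          have := pow_add_entry_ge hp 1 es.length x (upd e x) (es.foldl (fun s e => upd e s) (upd e x))
          rwa [pow_one] at this
      _ = (tmat p ^ (e :: es).length) x ((e :: es).foldl (fun s e => upd e s) x) := by
          rw [List.length_cons, Nat.add_comm]
          rfl

lemma foldl_upd_eq (x : St N) (j : Fin N) :
    ∀ es : List (Event N),
      (es.foldl (fun s e => upd e s) x) j = x ((es.map extMap).foldr (· ∘ ·) id j) := by
  intro es
  induction es generalizing x with
  | nil => rfl
  | cons e es ih =>
    simp only [List.foldl_cons, List.map_cons, List.foldr_cons]
    rw [ih (upd e x)]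
    rfl

variable {N : ℕ} {p : St N → Event N → ℝ}


lemma tmat_le_one (hp : IsRule p) (x : St N) (e : Event N) : p x e ≤ 1 := by
  rw [← hp.2 x]
  exact Finset.single_le_sum (fun e' _ => hp.1 x e') (Finset.mem_univ e)

lemma fix_eps (hp : IsRule p) (hfix : FixAxiom p) :
    ∃ (m : ℕ) (ε : ℝ), 1 ≤ m ∧ 0 < ε ∧ ε ≤ 1 ∧
      ∀ x : St N, ε ≤ (tmat p ^ m) x (stA N) + (tmat p ^ m) x (stB N) := by
  obtain ⟨i, m, ev, hm, hpos, -, hcomp⟩ := hfix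
  haveI : NeZero m := ⟨Nat.pos_of_ne_zero (fun h => by omega) |>.ne'⟩
  have hne : (Finset.univ : Finset (St N × Fin m)).Nonempty := Finset.univ_nonempty
  set δ : ℝ := Finset.univ.inf' hne (fun xk : St N × Fin m => p xk.1 (ev xk.2)) with hδdef
  have hδpos : 0 < δ := by
    rw [hδdef, Finset.lt_inf'_iff]
    exact fun xk _ => hpos xk.2 xk.1
  have hδle : ∀ (x' : St N) (k : Fin m), δ ≤ p x' (ev k) := fun x' k =>
    Finset.inf'_le _ (Finset.mem_univ (x', k))
  have hδ1 : δ ≤ 1 := le_trans (hδle (stA N) ⟨0, hm⟩) (tmat_le_one hp _ _)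
  refine ⟨m, δ ^ m, hm, pow_pos hδpos m, pow_le_one₀ hδpos.le hδ1, fun x => ?_⟩
  set es : List (Event N) := List.ofFn ev with hes
  have hlen : es.length = m := List.length_ofFn
  have hmem : ∀ e ∈ es, ∀ x', δ ≤ p x' e := by
    intro e he x'
    rw [hes, List.mem_ofFn] at he
    obtain ⟨k, rfl⟩ := he
    exact hδle x' k
  have hend : es.foldl (fun s e => upd e s) x = (fun _ => x i) := by
    funext j
    rw [foldl_upd_eq]
    congr 1
    have : es.map extMap = List.ofFn (fun k => extMap (ev k)) := by
      rw [hes, List.map_ofFn]; rfl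
    rw [this, hcomp j]
  have hpath := path_lb hp δ hδpos.le es x hmem
  rw [hlen, hend] at hpath
  cases hxi : x i with
  | true =>
    have : (fun _ => x i) = stA N := by funext j; simp [hxi, stA]
    rw [this] at hpath
    exact le_add_of_le_of_nonneg hpath (pow_nonneg_entry hp m x (stB N))
  | false =>
    have : (fun _ => x i) = stB N := by funext j; simp [hxi, stB]
    rw [this] at hpath
    exact le_add_of_nonneg_of_le (pow_nonneg_entry hp m x (stA N)) hpath

variable {N : ℕ} {p : St N → Event N → ℝ}

/-- transient states as a finset -/
def Tc (N : ℕ) : Finset (St N) := ({stA N, stB N} : Finset (St N))ᶜ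

lemma mem_Tc {z : St N} : z ∈ Tc N ↔ z ≠ stA N ∧ z ≠ stB N := by
  simp [Tc, not_or]

lemma hAB_of_mem {z : St N} (hz : z ∈ Tc N) : stA N ≠ stB N := by
  intro hEq
  obtain ⟨j, -⟩ := Function.ne_iff.mp (mem_Tc.mp hz).1
  have := congrFun hEq j
  simp [stA, stB] at this

/-- mass on transient states after t steps -/
noncomputable def mass (p : St N → Event N → ℝ) (x : St N) (t : ℕ) : ℝ :=
  ∑ y ∈ Tc N, (tmat p ^ t) x y

lemma mass_nonneg (hp : IsRule p) (x : St N) (t : ℕ) : 0 ≤ mass p x t :=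
  Finset.sum_nonneg fun y _ => pow_nonneg_entry hp t x y

lemma entry_le_mass (hp : IsRule p) (x : St N) (t : ℕ) {y : St N} (hy : y ∈ Tc N) :
    (tmat p ^ t) x y ≤ mass p x t :=
  Finset.single_le_sum (fun z _ => pow_nonneg_entry hp t x z) hy

lemma absorb_Tc_zero (hp : IsRule p) (k : ℕ) {z : St N}
    (hz : z = stA N ∨ z = stB N) : ∑ y ∈ Tc N, (tmat p ^ k) z y = 0 := by
  refine Finset.sum_eq_zero fun y hy => ?_
  rcases hz with rfl | rfl
  · rw [pow_fixed hp upd_stA, if_neg (mem_Tc.mp hy).1]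
  · rw [pow_fixed hp upd_stB, if_neg (mem_Tc.mp hy).2]

lemma mass_step (x : St N) (t k : ℕ) :
    mass p x (t + k) = ∑ z : St N, (tmat p ^ t) x z * ∑ y ∈ Tc N, (tmat p ^ k) z y := by
  unfold mass
  simp only [pow_add, Matrix.mul_apply]
  rw [Finset.sum_comm]
  exact Finset.sum_congr rfl fun z _ => by rw [Finset.mul_sum]

lemma mass_split (hp : IsRule p) (x : St N) (t k : ℕ) :
    mass p x (t + k) = ∑ z ∈ Tc N, (tmat p ^ t) x z * ∑ y ∈ Tc N, (tmat p ^ k) z y := by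
  rw [mass_step]
  rw [← Finset.sum_add_sum_compl (Tc N)
    (fun z => (tmat p ^ t) x z * ∑ y ∈ Tc N, (tmat p ^ k) z y)]
  have : ∀ z ∈ (Tc N)ᶜ, (tmat p ^ t) x z * ∑ y ∈ Tc N, (tmat p ^ k) z y = 0 := by
    intro z hz
    have hz' : z = stA N ∨ z = stB N := by
      have := Finset.mem_compl.mp hz
      simp only [Tc, Finset.notMem_compl, Finset.mem_insert, Finset.mem_singleton] at this
      exact this
    rw [absorb_Tc_zero hp k hz', mul_zero]
  rw [Finset.sum_eq_zero this, add_zero]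

lemma mass_mono (hp : IsRule p) (x : St N) (t k : ℕ) : mass p x (t + k) ≤ mass p x t := by
  rw [mass_split hp]
  calc ∑ z ∈ Tc N, (tmat p ^ t) x z * ∑ y ∈ Tc N, (tmat p ^ k) z y
      ≤ ∑ z ∈ Tc N, (tmat p ^ t) x z * 1 := by
        refine Finset.sum_le_sum fun z hz => ?_
        refine mul_le_mul_of_nonneg_left ?_ (pow_nonneg_entry hp t x z)
        calc ∑ y ∈ Tc N, (tmat p ^ k) z y
            ≤ ∑ y : St N, (tmat p ^ k) z y :=
              Finset.sum_le_sum_of_subset_of_nonneg (Finset.subset_univ _)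
                (fun y _ _ => pow_nonneg_entry hp k z y)
          _ = 1 := pow_row_sum hp k z
    _ = mass p x t := by simp [mass]

lemma mass_decay (hp : IsRule p) {m : ℕ} {ε : ℝ}
    (hfe : ∀ z : St N, ε ≤ (tmat p ^ m) z (stA N) + (tmat p ^ m) z (stB N))
    (x : St N) (t : ℕ) : mass p x (t + m) ≤ (1 - ε) * mass p x t := by
  rw [mass_split hp]
  calc ∑ z ∈ Tc N, (tmat p ^ t) x z * ∑ y ∈ Tc N, (tmat p ^ m) z y
      ≤ ∑ z ∈ Tc N, (tmat p ^ t) x z * (1 - ε) := by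
        refine Finset.sum_le_sum fun z hz => ?_
        refine mul_le_mul_of_nonneg_left ?_ (pow_nonneg_entry hp t x z)
        have hAB := hAB_of_mem hz
        have hpair : ∑ y ∈ ({stA N, stB N} : Finset (St N)), (tmat p ^ m) z y
            = (tmat p ^ m) z (stA N) + (tmat p ^ m) z (stB N) :=
          Finset.sum_pair hAB
        have hsplit := Finset.sum_compl_add_sum ({stA N, stB N} : Finset (St N))
          (fun y => (tmat p ^ m) z y)
        have hrow := pow_row_sum hp m z
        have hε := hfe z
        have : (Tc N : Finset (St N)) = ({stA N, stB N} : Finset (St N))ᶜ := rfl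
        rw [this]
        linarith [hsplit, hpair, hrow, hε]
    _ = (1 - ε) * mass p x t := by rw [← Finset.sum_mul, mul_comm]; simp [mass]

variable {N : ℕ} {p : St N → Event N → ℝ}

lemma mass_zero_le_one (hp : IsRule p) (x : St N) : mass p x 0 ≤ 1 := by
  calc mass p x 0 ≤ ∑ y : St N, (tmat p ^ 0) x y :=
        Finset.sum_le_sum_of_subset_of_nonneg (Finset.subset_univ _)
          (fun y _ _ => pow_nonneg_entry hp 0 x y)
    _ = 1 := pow_row_sum hp 0 x

lemma mass_geom (hp : IsRule p) {m : ℕ} {ε : ℝ} (hε1 : ε ≤ 1)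
    (hfe : ∀ z : St N, ε ≤ (tmat p ^ m) z (stA N) + (tmat p ^ m) z (stB N))
    (x : St N) : ∀ j : ℕ, mass p x (j * m) ≤ (1 - ε) ^ j := by
  intro j
  induction j with
  | zero => simpa using mass_zero_le_one hp x
  | succ n ih =>
    have h1 : (n + 1) * m = n * m + m := by ring
    rw [h1]
    calc mass p x (n * m + m) ≤ (1 - ε) * mass p x (n * m) := mass_decay hp hfe x (n * m)
      _ ≤ (1 - ε) * (1 - ε) ^ n := by
          exact mul_le_mul_of_nonneg_left ih (by linarith)
      _ = (1 - ε) ^ (n + 1) := by ring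

lemma mass_sum_range_le (hp : IsRule p) {m : ℕ} {ε : ℝ} (hm : 1 ≤ m)
    (hε0 : 0 < ε) (hε1 : ε ≤ 1)
    (hfe : ∀ z : St N, ε ≤ (tmat p ^ m) z (stA N) + (tmat p ^ m) z (stB N))
    (x : St N) (n : ℕ) : ∑ t ∈ Finset.range n, mass p x t ≤ m / ε := by
  have h1 : ∑ t ∈ Finset.range n, mass p x t ≤ ∑ t ∈ Finset.range (n * m), mass p x t := by
    refine Finset.sum_le_sum_of_subset_of_nonneg ?_ fun t _ _ => mass_nonneg hp x t
    exact Finset.range_subset_range.mpr (Nat.le_mul_of_pos_right n (by omega))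
  have h2 : ∀ n : ℕ, ∑ t ∈ Finset.range (n * m), mass p x t
      ≤ ∑ j ∈ Finset.range n, (m : ℝ) * (1 - ε) ^ j := by
    intro n
    induction n with
    | zero => simp
    | succ k ih =>
      have hk : (k + 1) * m = k * m + m := by ring
      rw [hk, Finset.sum_range_add, Finset.sum_range_succ]
      refine add_le_add ih ?_
      calc ∑ t ∈ Finset.range m, mass p x (k * m + t)
          ≤ ∑ _t ∈ Finset.range m, (1 - ε) ^ k :=
            Finset.sum_le_sum fun t _ =>
              le_trans (mass_mono hp x (k * m) t) (mass_geom hp hε1 hfe x k)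
        _ = (m : ℝ) * (1 - ε) ^ k := by simp [mul_comm]
  have h3 : ∑ j ∈ Finset.range n, (m : ℝ) * (1 - ε) ^ j ≤ m / ε := by
    rw [← Finset.mul_sum]
    have hne : (1 - ε : ℝ) ≠ 1 := by linarith
    rw [geom_sum_eq hne]
    have hnum : ((1 - ε) ^ n - 1) / (1 - ε - 1) = (1 - (1 - ε) ^ n) / ε := by
      rw [div_eq_div_iff (by linarith) (by linarith)]
      ring
    rw [hnum, div_eq_mul_inv, div_eq_mul_inv, ← mul_assoc]
    refine mul_le_mul_of_nonneg_right ?_ (by positivity)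
    have : (0:ℝ) ≤ (1 - ε) ^ n := pow_nonneg (by linarith) n
    nlinarith
  exact le_trans h1 (le_trans (h2 n) h3)

lemma summable_mass (hp : IsRule p) (hfix : FixAxiom p) (x : St N) :
    Summable (mass p x) := by
  obtain ⟨m, ε, hm, hε0, hε1, hfe⟩ := fix_eps hp hfix
  exact summable_of_sum_range_le (fun t => mass_nonneg hp x t)
    (mass_sum_range_le hp hm hε0 hε1 hfe x)

lemma mass_tendsto_zero (hp : IsRule p) (hfix : FixAxiom p) (x : St N) :
    Tendsto (mass p x) atTop (𝓝 0) :=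
  (summable_mass hp hfix x).tendsto_atTop_zero

lemma summable_entry (hp : IsRule p) (hfix : FixAxiom p) (x : St N) {y : St N}
    (hy : y ∈ Tc N) : Summable (fun t => (tmat p ^ t) x y) :=
  Summable.of_nonneg_of_le (fun t => pow_nonneg_entry hp t x y)
    (fun t => entry_le_mass hp x t hy) (summable_mass hp hfix x)

variable {N : ℕ} {p : St N → Event N → ℝ}




variable {ξ : St N} {φ : St N → ℝ}

lemma sum_phi_eq (hφA : φ (stA N) = 0) (hφB : φ (stB N) = 0) (t : ℕ) :
    ∑ x : St N, (tmat p ^ t) ξ x * φ x = ∑ x ∈ Tc N, (tmat p ^ t) ξ x * φ x := by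
  symm
  refine Finset.sum_subset (Finset.subset_univ _) fun x _ hx => ?_
  have hx' : x = stA N ∨ x = stB N := by
    simp only [Tc, Finset.mem_compl, not_not, Finset.mem_insert, Finset.mem_singleton] at hx
    exact hx
  rcases hx' with rfl | rfl
  · rw [hφA, mul_zero]
  · rw [hφB, mul_zero]

lemma abs_sum_phi_le (hp : IsRule p) (hφA : φ (stA N) = 0) (hφB : φ (stB N) = 0) (t : ℕ) :
    |∑ x : St N, (tmat p ^ t) ξ x * φ x| ≤ (∑ x ∈ Tc N, |φ x|) * mass p ξ t := by
  rw [sum_phi_eq hφA hφB t]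
  calc |∑ x ∈ Tc N, (tmat p ^ t) ξ x * φ x| ≤ ∑ x ∈ Tc N, |(tmat p ^ t) ξ x * φ x| :=
        Finset.abs_sum_le_sum_abs _ _
    _ ≤ ∑ x ∈ Tc N, mass p ξ t * |φ x| := by
        refine Finset.sum_le_sum fun x hx => ?_
        rw [abs_mul, abs_of_nonneg (pow_nonneg_entry hp t ξ x)]
        exact mul_le_mul_of_nonneg_right (entry_le_mass hp ξ t hx) (abs_nonneg _)
    _ = (∑ x ∈ Tc N, |φ x|) * mass p ξ t := by rw [← Finset.mul_sum, mul_comm]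

lemma summable_abs_phi (hp : IsRule p) (hfix : FixAxiom p)
    (hφA : φ (stA N) = 0) (hφB : φ (stB N) = 0) :
    Summable fun t : ℕ => |∑ x : St N, (tmat p ^ t) ξ x * φ x| :=
  Summable.of_nonneg_of_le (fun t => abs_nonneg _) (fun t => abs_sum_phi_le hp hφA hφB t)
    ((summable_mass hp hfix ξ).mul_left _)

lemma sgen_eq (hp : IsRule p) (hfix : FixAxiom p)
    (hφA : φ (stA N) = 0) (hφB : φ (stB N) = 0) :
    sgen p ξ φ = ∑ x ∈ Tc N, sojourn p ξ x * φ x := by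
  unfold sgen
  calc ∑' t : ℕ, ∑ x : St N, (tmat p ^ t) ξ x * φ x
      = ∑' t : ℕ, ∑ x ∈ Tc N, (tmat p ^ t) ξ x * φ x := by
        exact tsum_congr fun t => sum_phi_eq hφA hφB t
    _ = ∑ x ∈ Tc N, ∑' t : ℕ, (tmat p ^ t) ξ x * φ x :=
        Summable.tsum_finsetSum fun x hx => (summable_entry hp hfix ξ hx).mul_right _
    _ = ∑ x ∈ Tc N, sojourn p ξ x * φ x := by
        refine Finset.sum_congr rfl fun x _ => ?_
        rw [sojourn, tsum_mul_right]

lemma sojourn_nonneg (hp : IsRule p) (x : St N) : 0 ≤ sojourn p ξ x :=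
  tsum_nonneg fun t => pow_nonneg_entry hp t ξ x

variable {N : ℕ} {p : St N → Event N → ℝ} {ξ : St N} {u : ℝ} {q : St N → ℝ}

lemma amend_absorb (hp : IsRule p) {a : St N} (haAB : a = stA N ∨ a = stB N)
    (ha : ∀ e : Event N, upd e a = a) {y : St N} (hy : y ∈ Tc N) :
    amend p ξ u a y = if y = ξ then u else 0 := by
  unfold amend
  rw [Matrix.of_apply, if_pos haAB]
  by_cases h : y = ξ
  · rw [if_pos h, if_pos h]
  · rw [if_neg h, if_neg h, tmat_fixed hp ha]
    have hya : y ≠ a := by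
      rcases haAB with rfl | rfl
      · exact (mem_Tc.mp hy).1
      · exact (mem_Tc.mp hy).2
    rw [if_neg hya, mul_zero]

lemma star_eq (hp : IsRule p)
    (hq : ∀ y, ∑ x : St N, q x * amend p ξ u x y = q y)
    {y : St N} (hy : y ∈ Tc N) :
    q y = (∑ x ∈ Tc N, q x * tmat p x y)
      + u * (q (stA N) + q (stB N)) * (if y = ξ then 1 else 0) := by
  have hAB := hAB_of_mem hy
  rw [← hq y, ← Finset.sum_add_sum_compl (Tc N) (fun x => q x * amend p ξ u x y)]
  congr 1
  · refine Finset.sum_congr rfl fun x hx => ?_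
    have hx' := mem_Tc.mp hx
    unfold amend
    rw [Matrix.of_apply, if_neg (by push_neg; exact hx')]
  · have hcompl : (Tc N)ᶜ = ({stA N, stB N} : Finset (St N)) := by
      simp [Tc]
    rw [hcompl, Finset.sum_pair hAB,
      amend_absorb hp (Or.inl rfl) upd_stA hy,
      amend_absorb hp (Or.inr rfl) upd_stB hy]
    by_cases h : y = ξ <;> simp [h] <;> ring

lemma restrict_mul (hp : IsRule p) {y : St N} (hy : y ∈ Tc N) (z : St N) (n : ℕ) :
    ∑ x ∈ Tc N, tmat p z x * (tmat p ^ n) x y = (tmat p ^ (n + 1)) z y := by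
  rw [pow_succ', Matrix.mul_apply]
  refine Finset.sum_subset (Finset.subset_univ _) fun x _ hx => ?_
  have hx' : x = stA N ∨ x = stB N := by
    simp only [Tc, Finset.mem_compl, not_not, Finset.mem_insert, Finset.mem_singleton] at hx
    exact hx
  have : (tmat p ^ n) x y = 0 := by
    rcases hx' with rfl | rfl
    · rw [pow_fixed hp upd_stA, if_neg (mem_Tc.mp hy).1]
    · rw [pow_fixed hp upd_stB, if_neg (mem_Tc.mp hy).2]
  rw [this, mul_zero]

lemma claim_eq (hp : IsRule p) (hξmem : ξ ∈ Tc N)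
    (hq : ∀ y, ∑ x : St N, q x * amend p ξ u x y = q y) :
    ∀ (n : ℕ), ∀ y ∈ Tc N, q y =
      u * (q (stA N) + q (stB N)) * (∑ t ∈ Finset.range n, (tmat p ^ t) ξ y)
      + ∑ x ∈ Tc N, q x * (tmat p ^ n) x y := by
  intro n
  induction n with
  | zero =>
    intro y hy
    simp only [Finset.range_zero, Finset.sum_empty, mul_zero, zero_add, pow_zero,
      Matrix.one_apply]
    rw [Finset.sum_congr rfl (fun x _ => mul_ite (x = y) (q x) 1 0)]
    simp only [mul_one, mul_zero]
    rw [Finset.sum_ite_eq' (Tc N) y q, if_pos hy]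
  | succ n ih =>
    intro y hy
    rw [ih y hy]
    have hsub : ∑ x ∈ Tc N, q x * (tmat p ^ n) x y
        = ∑ x ∈ Tc N, ((∑ z ∈ Tc N, q z * tmat p z x)
            + u * (q (stA N) + q (stB N)) * (if x = ξ then 1 else 0)) * (tmat p ^ n) x y := by
      exact Finset.sum_congr rfl fun x hx => by rw [← star_eq hp hq hx]
    rw [hsub]
    simp only [add_mul, Finset.sum_add_distrib, Finset.sum_mul]
    have h1 : ∑ x ∈ Tc N, ∑ z ∈ Tc N, q z * tmat p z x * (tmat p ^ n) x y
        = ∑ z ∈ Tc N, q z * (tmat p ^ (n + 1)) z y := by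
      rw [Finset.sum_comm]
      refine Finset.sum_congr rfl fun z _ => ?_
      rw [← restrict_mul hp hy z n, Finset.mul_sum]
      exact Finset.sum_congr rfl fun x _ => by ring
    have h2 : ∑ x ∈ Tc N, u * (q (stA N) + q (stB N)) * (if x = ξ then 1 else 0)
          * (tmat p ^ n) x y
        = u * (q (stA N) + q (stB N)) * (tmat p ^ n) ξ y := by
      rw [Finset.sum_congr rfl (fun x _ => by
        rw [mul_ite, ite_mul, mul_one, mul_zero, zero_mul])]
      rw [Finset.sum_ite_eq' (Tc N) ξ (fun x => u * (q (stA N) + q (stB N)) * (tmat p ^ n) x y),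
        if_pos hξmem]
    rw [h1, h2, Finset.sum_range_succ]
    ring

variable {N : ℕ} {p : St N → Event N → ℝ} {ξ : St N} {u : ℝ} {q : St N → ℝ}

lemma statDist_eq (hp : IsRule p) (hfix : FixAxiom p) (hξmem : ξ ∈ Tc N)
    (hq0 : ∀ x, 0 ≤ q x)
    (hq : ∀ y, ∑ x : St N, q x * amend p ξ u x y = q y)
    {y : St N} (hy : y ∈ Tc N) :
    q y = u * (q (stA N) + q (stB N)) * sojourn p ξ y := by
  set c := q (stA N) + q (stB N) with hc
  have hsum := summable_entry hp hfix ξ hy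
  have hpart : Tendsto (fun n => u * c * ∑ t ∈ Finset.range n, (tmat p ^ t) ξ y) atTop
      (𝓝 (u * c * sojourn p ξ y)) :=
    (hsum.hasSum.tendsto_sum_nat).const_mul (u * c)
  have hres : Tendsto (fun n => ∑ x ∈ Tc N, q x * (tmat p ^ n) x y) atTop (𝓝 0) := by
    have : (0 : ℝ) = ∑ x ∈ Tc N, (0 : ℝ) := by simp
    rw [this]
    refine tendsto_finset_sum _ fun x _ => ?_
    refine squeeze_zero (fun n => mul_nonneg (hq0 x) (pow_nonneg_entry hp n x y))
      (fun n => mul_le_mul_of_nonneg_left (entry_le_mass hp x n hy) (hq0 x)) ?_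
    simpa using (mass_tendsto_zero hp hfix x).const_mul (q x)
  have hall : Tendsto (fun n => u * c * (∑ t ∈ Finset.range n, (tmat p ^ t) ξ y)
      + ∑ x ∈ Tc N, q x * (tmat p ^ n) x y) atTop (𝓝 (u * c * sojourn p ξ y + 0)) :=
    hpart.add hres
  have heq : (fun n => u * c * (∑ t ∈ Finset.range n, (tmat p ^ t) ξ y)
      + ∑ x ∈ Tc N, q x * (tmat p ^ n) x y) = fun _ => q y := by
    funext n
    exact (claim_eq hp hξmem hq n y hy).symm
  rw [heq] at hall
  have := tendsto_nhds_unique hall tendsto_const_nhds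
  linarith [this]
end Aux

/-- for `φ` vanishing on the monoallelic states, the series
`Σ_t E[φ(x^t) | x⁰ = ξ]` converges absolutely, and the stationary expectation of `φ` in the
amended chain is (one-sidedly) differentiable in `u` at `u = 0` with that series as its
derivative. -/
theorem statement1 {N : ℕ} (p : St N → Event N → ℝ) (hp : IsRule p)
    (hfix : FixAxiom p) (ξ : St N) (hξ : Transient ξ)
    (statDist : ℝ → St N → ℝ)
    (hstat : ∀ u ∈ Set.Ioc (0 : ℝ) 1, IsStat (amend p ξ u) (statDist u))
    (φ : St N → ℝ) (hφA : φ (stA N) = 0) (hφB : φ (stB N) = 0) :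
    (Summable fun t : ℕ => |∑ x : St N, (tmat p ^ t) ξ x * φ x|) ∧
    ∃ f : ℝ → ℝ, (∀ u ∈ Set.Ioc (0 : ℝ) 1, f u = ∑ x : St N, statDist u x * φ x) ∧
      HasDerivWithinAt f (sgen p ξ φ) (Set.Ici 0) 0 := by
  have hξmem : ξ ∈ Tc N := mem_Tc.mpr hξ
  have hAB := hAB_of_mem hξmem
  refine ⟨summable_abs_phi hp hfix hφA hφB, ?_⟩
  set G := sgen p ξ φ with hG
  set s := ∑ x ∈ Tc N, sojourn p ξ x with hs
  have hs0 : 0 ≤ s := Finset.sum_nonneg fun x _ => sojourn_nonneg hp x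
  refine ⟨fun u => u * G / (1 + u * s), ?_, ?_⟩
  · intro u hu
    obtain ⟨hq0, hq1, hq2⟩ := hstat u hu
    have hu0 : 0 < u := hu.1
    set q : St N → ℝ := statDist u with hqdef
    set c := q (stA N) + q (stB N) with hc
    have key : ∀ y ∈ Tc N, q y = u * c * sojourn p ξ y := fun y hy =>
      statDist_eq hp hfix hξmem hq0 hq2 hy
    have hnorm : u * c * s + c = 1 := by
      have hsplit := Finset.sum_add_sum_compl (Tc N) q
      have hcompl : (Tc N)ᶜ = ({stA N, stB N} : Finset (St N)) := by simp [Tc]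
      have h2 : ∑ x ∈ (Tc N)ᶜ, q x = c := by rw [hcompl, Finset.sum_pair hAB]
      have h1 : ∑ x ∈ Tc N, q x = u * c * s := by
        rw [hs, Finset.mul_sum]
        exact Finset.sum_congr rfl fun x hx => key x hx
      rw [h1, h2, hq1] at hsplit
      exact hsplit
    have hphi : ∑ x : St N, q x * φ x = u * c * G := by
      have e1 : ∑ x : St N, q x * φ x = ∑ x ∈ Tc N, q x * φ x := by
        symm
        refine Finset.sum_subset (Finset.subset_univ _) fun x _ hx => ?_
        have hx' : x = stA N ∨ x = stB N := by
          simp only [Tc, Finset.mem_compl, not_not, Finset.mem_insert,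
            Finset.mem_singleton] at hx
          exact hx
        rcases hx' with rfl | rfl
        · rw [hφA, mul_zero]
        · rw [hφB, mul_zero]
      rw [e1, hG, sgen_eq hp hfix hφA hφB, Finset.mul_sum]
      refine Finset.sum_congr rfl fun x hx => ?_
      rw [key x hx]; ring
    have hden : (0:ℝ) < 1 + u * s := by nlinarith
    rw [hphi, div_eq_iff hden.ne']
    linear_combination (-(u * G)) * hnorm
  · have h₁ : HasDerivAt (fun v : ℝ => v * G) G 0 := by
      simpa using (hasDerivAt_id 0).mul_const G
    have h₂ : HasDerivAt (fun v : ℝ => 1 + v * s) s 0 := by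
      simpa using ((hasDerivAt_id 0).mul_const s).const_add 1
    have hden : (1 : ℝ) + 0 * s ≠ 0 := by norm_num
    have hd := h₁.div h₂ hden
    have hval : (G * (1 + 0 * s) - 0 * G * s) / (1 + 0 * s)^2 = G := by norm_num
    rw [hval] at hd
    exact hd.hasDerivWithinAt

end Evo
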